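/- A real symmetric symplectic 4×4 matrix X = a M_{1⊗1} + M_{p⊗i} + M_{q⊗j} + M_{r⊗k} is positive definite if and only if a > 0 and 2a² − 2 q·q + 1 > 0. In particular, if a > 0 and q = 0, then X is positive definite. -/

import Mathlib

open Matrix Quaternion

set_option maxHeartbeats 1000000
set_option linter.unnecessarySeqFocus false

noncomputable def quatBasis : Module.Basis (Fin 4) ℝ (Quaternion ℝ) :=
  Module.Basis.ofEquivFun (QuaternionAlgebra.linearEquivTuple (-1 : ℝ) (0 : ℝ) (-1 : ℝ))

/-- The 4×4 real matrix of the ℝ-linear map `x ↦ p * x * star q` on ℍ ≅ ℝ⁴. -/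
noncomputable def quatM (p q : Quaternion ℝ) : Matrix (Fin 4) (Fin 4) ℝ :=
  LinearMap.toMatrix quatBasis quatBasis
    ((LinearMap.mulLeft ℝ p).comp (LinearMap.mulRight ℝ (star q)))

def qi : Quaternion ℝ := ⟨0, 1, 0, 0⟩
def qj : Quaternion ℝ := ⟨0, 0, 1, 0⟩
def qk : Quaternion ℝ := ⟨0, 0, 0, 1⟩

/-- Dot product of the imaginary (vector) parts of two quaternions. -/
def qdot (x y : Quaternion ℝ) : ℝ := x.imI * y.imI + x.imJ * y.imJ + x.imK * y.imK

/-- Cross product of the imaginary (vector) parts, as a pure quaternion. -/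
def qcross (x y : Quaternion ℝ) : Quaternion ℝ :=
  ⟨0, x.imJ * y.imK - x.imK * y.imJ, x.imK * y.imI - x.imI * y.imK,
    x.imI * y.imJ - x.imJ * y.imI⟩

lemma quatBasis_apply (j : Fin 4) :
    quatBasis j = (![⟨1,0,0,0⟩,⟨0,1,0,0⟩,⟨0,0,1,0⟩,⟨0,0,0,1⟩] j : Quaternion ℝ) := by
  rw [quatBasis]; erw [Module.Basis.coe_ofEquivFun]
  fin_cases j <;>
  · show (QuaternionAlgebra.equivTuple (-1:ℝ) 0 (-1)).symm (Pi.single _ 1) = _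
    ext <;> simp [Pi.single_apply]

lemma quatBasis_repr (x : Quaternion ℝ) (i : Fin 4) :
    quatBasis.repr x i = ![x.re, x.imI, x.imJ, x.imK] i := by
  fin_cases i <;> rfl

lemma quatM_apply (p q : Quaternion ℝ) (i j : Fin 4) :
    quatM p q i j =
      ![(p * (quatBasis j * star q)).re, (p * (quatBasis j * star q)).imI,
        (p * (quatBasis j * star q)).imJ, (p * (quatBasis j * star q)).imK] i := by
  rw [quatM, LinearMap.toMatrix_apply, quatBasis_repr]
  simp [LinearMap.mulLeft_apply, LinearMap.mulRight_apply, mul_assoc]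

lemma bigM_posdef (e u1 u2 u3 : ℝ) (he : 0 < e) (hu : 4*(u1^2+u2^2+u3^2) < e^2) :
    (!![e+2*u2, 2*u3, 0, -2*u1;
        2*u3, e-2*u2, 2*u1, 0;
        0, 2*u1, e+2*u2, 2*u3;
        -2*u1, 0, 2*u3, e-2*u2] : Matrix (Fin 4) (Fin 4) ℝ).PosDef := by
  rw [Matrix.posDef_iff_dotProduct_mulVec]
  constructor
  · show _ᴴ = _
    ext i j
    fin_cases i <;> fin_cases j <;> simp [Matrix.conjTranspose_apply]
  · intro x hx
    have hst : star x = x := by ext i; simp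
    rw [hst]
    have hn : 0 < x 0 ^ 2 + x 1 ^ 2 + x 2 ^ 2 + x 3 ^ 2 := by
      by_contra hcon
      push_neg at hcon
      apply hx
      have e0 : x 0 = 0 := sq_eq_zero_iff.mp (le_antisymm
        (by nlinarith [sq_nonneg (x 1), sq_nonneg (x 2), sq_nonneg (x 3)]) (sq_nonneg _))
      have e1 : x 1 = 0 := sq_eq_zero_iff.mp (le_antisymm
        (by nlinarith [sq_nonneg (x 0), sq_nonneg (x 2), sq_nonneg (x 3)]) (sq_nonneg _))
      have e2 : x 2 = 0 := sq_eq_zero_iff.mp (le_antisymm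
        (by nlinarith [sq_nonneg (x 0), sq_nonneg (x 1), sq_nonneg (x 3)]) (sq_nonneg _))
      have e3 : x 3 = 0 := sq_eq_zero_iff.mp (le_antisymm
        (by nlinarith [sq_nonneg (x 0), sq_nonneg (x 1), sq_nonneg (x 2)]) (sq_nonneg _))
      funext i
      fin_cases i
      · exact e0
      · exact e1
      · exact e2
      · exact e3
    have hy : (-u2 * x 0 - u3 * x 1 + u1 * x 3) ^ 2 + (-u3 * x 0 + u2 * x 1 - u1 * x 2) ^ 2 + (-u1 * x 1 - u2 * x 2 - u3 * x 3) ^ 2 + (u1 * x 0 - u3 * x 2 + u2 * x 3) ^ 2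
        = (u1^2+u2^2+u3^2) * (x 0 ^ 2 + x 1 ^ 2 + x 2 ^ 2 + x 3 ^ 2) := by ring
    have hcs : (x 0 * (-u2 * x 0 - u3 * x 1 + u1 * x 3) + x 1 * (-u3 * x 0 + u2 * x 1 - u1 * x 2) + x 2 * (-u1 * x 1 - u2 * x 2 - u3 * x 3) + x 3 * (u1 * x 0 - u3 * x 2 + u2 * x 3)) ^ 2 ≤ (x 0 ^ 2 + x 1 ^ 2 + x 2 ^ 2 + x 3 ^ 2) * ((-u2 * x 0 - u3 * x 1 + u1 * x 3) ^ 2 + (-u3 * x 0 + u2 * x 1 - u1 * x 2) ^ 2 + (-u1 * x 1 - u2 * x 2 - u3 * x 3) ^ 2 + (u1 * x 0 - u3 * x 2 + u2 * x 3) ^ 2) := by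
      nlinarith [sq_nonneg (x 0 * (-u3 * x 0 + u2 * x 1 - u1 * x 2) - x 1 * (-u2 * x 0 - u3 * x 1 + u1 * x 3)), sq_nonneg (x 0 * (-u1 * x 1 - u2 * x 2 - u3 * x 3) - x 2 * (-u2 * x 0 - u3 * x 1 + u1 * x 3)),
        sq_nonneg (x 0 * (u1 * x 0 - u3 * x 2 + u2 * x 3) - x 3 * (-u2 * x 0 - u3 * x 1 + u1 * x 3)), sq_nonneg (x 1 * (-u1 * x 1 - u2 * x 2 - u3 * x 3) - x 2 * (-u3 * x 0 + u2 * x 1 - u1 * x 2)),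
        sq_nonneg (x 1 * (u1 * x 0 - u3 * x 2 + u2 * x 3) - x 3 * (-u3 * x 0 + u2 * x 1 - u1 * x 2)), sq_nonneg (x 2 * (u1 * x 0 - u3 * x 2 + u2 * x 3) - x 3 * (-u1 * x 1 - u2 * x 2 - u3 * x 3))]
    have key : 0 < e * (x 0 ^ 2 + x 1 ^ 2 + x 2 ^ 2 + x 3 ^ 2) - 2 * (x 0 * (-u2 * x 0 - u3 * x 1 + u1 * x 3) + x 1 * (-u3 * x 0 + u2 * x 1 - u1 * x 2) + x 2 * (-u1 * x 1 - u2 * x 2 - u3 * x 3) + x 3 * (u1 * x 0 - u3 * x 2 + u2 * x 3)) := by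
      nlinarith [hcs, hy, hn, he, hu, mul_pos he hn, mul_pos hn hn,
        sq_nonneg (2 * (x 0 * (-u2 * x 0 - u3 * x 1 + u1 * x 3) + x 1 * (-u3 * x 0 + u2 * x 1 - u1 * x 2) + x 2 * (-u1 * x 1 - u2 * x 2 - u3 * x 3) + x 3 * (u1 * x 0 - u3 * x 2 + u2 * x 3)) - e * (x 0 ^ 2 + x 1 ^ 2 + x 2 ^ 2 + x 3 ^ 2))]
    have hexp : x ⬝ᵥ ((!![e+2*u2, 2*u3, 0, -2*u1;
        2*u3, e-2*u2, 2*u1, 0;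
        0, 2*u1, e+2*u2, 2*u3;
        -2*u1, 0, 2*u3, e-2*u2] : Matrix (Fin 4) (Fin 4) ℝ) *ᵥ x)
        = e * (x 0 ^ 2 + x 1 ^ 2 + x 2 ^ 2 + x 3 ^ 2) - 2 * (x 0 * (-u2 * x 0 - u3 * x 1 + u1 * x 3) + x 1 * (-u3 * x 0 + u2 * x 1 - u1 * x 2) + x 2 * (-u1 * x 1 - u2 * x 2 - u3 * x 3) + x 3 * (u1 * x 0 - u3 * x 2 + u2 * x 3)) := by
      simp [dotProduct, Matrix.mulVec, Fin.sum_univ_four]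
      ring
    rw [hexp]
    exact key

lemma lem_X (a p1 p2 p3 q1 q2 q3 r1 r2 r3 : ℝ) :
    a • quatM 1 1 + quatM ⟨0,p1,p2,p3⟩ qi + quatM ⟨0,q1,q2,q3⟩ qj
      + quatM ⟨0,r1,r2,r3⟩ qk =
      !![a + p1 + q2 + r3, q3 - r2, -p3 + r1, p2 - q1;
        q3 - r2, a + p1 - q2 - r3, p2 + q1, p3 + r1;
        -p3 + r1, p2 + q1, a - p1 + q2 - r3, q3 + r2;
        p2 - q1, p3 + r1, q3 + r2, a - p1 - q2 + r3] := by
  set P : Quaternion ℝ := ⟨0,p1,p2,p3⟩ with hP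
  set Q : Quaternion ℝ := ⟨0,q1,q2,q3⟩ with hQ
  set R' : Quaternion ℝ := ⟨0,r1,r2,r3⟩ with hR'
  ext i j
  simp only [Matrix.add_apply, Matrix.smul_apply, smul_eq_mul, quatM_apply,
    Quaternion.re_mul, Quaternion.imI_mul, Quaternion.imJ_mul, Quaternion.imK_mul,
    Quaternion.re_star, Quaternion.imI_star, Quaternion.imJ_star, Quaternion.imK_star]
  fin_cases i <;> fin_cases j <;>
    simp [quatBasis_apply, qi, qj, qk, hP, hQ, hR'] <;> ring

lemma lem_tr (a p1 p2 p3 q1 q2 q3 r1 r2 r3 : ℝ) :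
    (!![a + p1 + q2 + r3, q3 - r2, -p3 + r1, p2 - q1;
        q3 - r2, a + p1 - q2 - r3, p2 + q1, p3 + r1;
        -p3 + r1, p2 + q1, a - p1 + q2 - r3, q3 + r2;
        p2 - q1, p3 + r1, q3 + r2, a - p1 - q2 + r3] : Matrix (Fin 4) (Fin 4) ℝ)ᵀ = !![a + p1 + q2 + r3, q3 - r2, -p3 + r1, p2 - q1;
        q3 - r2, a + p1 - q2 - r3, p2 + q1, p3 + r1;
        -p3 + r1, p2 + q1, a - p1 + q2 - r3, q3 + r2;
        p2 - q1, p3 + r1, q3 + r2, a - p1 - q2 + r3] := by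
  ext i j
  fin_cases i <;> fin_cases j <;> simp [Matrix.transpose_apply]

lemma lem_her (a p1 p2 p3 q1 q2 q3 r1 r2 r3 : ℝ) :
    (!![a + p1 + q2 + r3, q3 - r2, -p3 + r1, p2 - q1;
        q3 - r2, a + p1 - q2 - r3, p2 + q1, p3 + r1;
        -p3 + r1, p2 + q1, a - p1 + q2 - r3, q3 + r2;
        p2 - q1, p3 + r1, q3 + r2, a - p1 - q2 + r3] : Matrix (Fin 4) (Fin 4) ℝ)ᴴ = !![a + p1 + q2 + r3, q3 - r2, -p3 + r1, p2 - q1;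
        q3 - r2, a + p1 - q2 - r3, p2 + q1, p3 + r1;
        -p3 + r1, p2 + q1, a - p1 + q2 - r3, q3 + r2;
        p2 - q1, p3 + r1, q3 + r2, a - p1 - q2 + r3] := by
  ext i j
  fin_cases i <;> fin_cases j <;> simp [Matrix.conjTranspose_apply]

lemma lem_MN (a q1 q2 q3 : ℝ) :
    (!![2*a + 2*q2 + 2, 2*q3, (0:ℝ), -2*q1;
        2*q3, 2*a - 2*q2 + 2, 2*q1, (0:ℝ);
        (0:ℝ), 2*q1, 2*a + 2*q2 + 2, 2*q3;
        -2*q1, (0:ℝ), 2*q3, 2*a - 2*q2 + 2] : Matrix (Fin 4) (Fin 4) ℝ) * !![2*a - 2*q2 + 2, -2*q3, (0:ℝ), 2*q1;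
        -2*q3, 2*a + 2*q2 + 2, -2*q1, (0:ℝ);
        (0:ℝ), -2*q1, 2*a - 2*q2 + 2, -2*q3;
        2*q1, (0:ℝ), -2*q3, 2*a + 2*q2 + 2]
      = ((2*a+2)^2 - 4*(q1^2+q2^2+q3^2)) • (1 : Matrix (Fin 4) (Fin 4) ℝ) := by
  ext i j
  fin_cases i <;> fin_cases j <;>
    simp [Matrix.mul_apply, Fin.sum_univ_four, Matrix.one_apply, Matrix.smul_apply,
      smul_eq_mul] <;> ring

lemma lem_mul1 (a p1 p2 p3 q1 q2 q3 r1 r2 r3 : ℝ)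
    (hg1i : a * q1 = r2 * p3 - r3 * p2) (hg1j : a * q2 = r3 * p1 - r1 * p3)
    (hg1k : a * q3 = r1 * p2 - r2 * p1)
    (h2 : p1 * q1 + p2 * q2 + p3 * q3 = 0) (h3 : r1 * q1 + r2 * q2 + r3 * q3 = 0)
    (h4 : a ^ 2 - (p1 * p1 + p2 * p2 + p3 * p3) + (q1 * q1 + q2 * q2 + q3 * q3)
      - (r1 * r1 + r2 * r2 + r3 * r3) = 1) :
    (!![a + p1 + q2 + r3, q3 - r2, -p3 + r1, p2 - q1;
        q3 - r2, a + p1 - q2 - r3, p2 + q1, p3 + r1;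
        -p3 + r1, p2 + q1, a - p1 + q2 - r3, q3 + r2;
        p2 - q1, p3 + r1, q3 + r2, a - p1 - q2 + r3] : Matrix (Fin 4) (Fin 4) ℝ) * !![a - p1 + q2 - r3, q3 + r2, p3 - r1, -p2 - q1;
        q3 + r2, a - p1 - q2 + r3, -p2 + q1, -p3 - r1;
        p3 - r1, -p2 + q1, a + p1 + q2 + r3, q3 - r2;
        -p2 - q1, -p3 - r1, q3 - r2, a + p1 - q2 - r3] = 1 := by
  ext i j
  fin_cases i <;> fin_cases j
  · simp [Matrix.mul_apply, Fin.sum_univ_four, Matrix.one_apply] <;> linear_combination (2 : ℝ) * hg1j + h4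
  · simp [Matrix.mul_apply, Fin.sum_univ_four, Matrix.one_apply] <;> linear_combination (2 : ℝ) * hg1k + (2 : ℝ) * h3
  · simp [Matrix.mul_apply, Fin.sum_univ_four, Matrix.one_apply] <;> ring
  · simp [Matrix.mul_apply, Fin.sum_univ_four, Matrix.one_apply] <;> linear_combination (-2 : ℝ) * hg1i + (-2 : ℝ) * h2
  · simp [Matrix.mul_apply, Fin.sum_univ_four, Matrix.one_apply] <;> linear_combination (2 : ℝ) * hg1k + (-2 : ℝ) * h3
  · simp [Matrix.mul_apply, Fin.sum_univ_four, Matrix.one_apply] <;> linear_combination (-2 : ℝ) * hg1j + h4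
  · simp [Matrix.mul_apply, Fin.sum_univ_four, Matrix.one_apply] <;> linear_combination (2 : ℝ) * hg1i + (2 : ℝ) * h2
  · simp [Matrix.mul_apply, Fin.sum_univ_four, Matrix.one_apply] <;> ring
  · simp [Matrix.mul_apply, Fin.sum_univ_four, Matrix.one_apply] <;> ring
  · simp [Matrix.mul_apply, Fin.sum_univ_four, Matrix.one_apply] <;> linear_combination (2 : ℝ) * hg1i + (-2 : ℝ) * h2
  · simp [Matrix.mul_apply, Fin.sum_univ_four, Matrix.one_apply] <;> linear_combination (2 : ℝ) * hg1j + h4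
  · simp [Matrix.mul_apply, Fin.sum_univ_four, Matrix.one_apply] <;> linear_combination (2 : ℝ) * hg1k + (-2 : ℝ) * h3
  · simp [Matrix.mul_apply, Fin.sum_univ_four, Matrix.one_apply] <;> linear_combination (-2 : ℝ) * hg1i + (2 : ℝ) * h2
  · simp [Matrix.mul_apply, Fin.sum_univ_four, Matrix.one_apply] <;> ring
  · simp [Matrix.mul_apply, Fin.sum_univ_four, Matrix.one_apply] <;> linear_combination (2 : ℝ) * hg1k + (2 : ℝ) * h3
  · simp [Matrix.mul_apply, Fin.sum_univ_four, Matrix.one_apply] <;> linear_combination (-2 : ℝ) * hg1j + h4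

lemma lem_sq (a p1 p2 p3 q1 q2 q3 r1 r2 r3 : ℝ)
    (hg1i : a * q1 = r2 * p3 - r3 * p2) (hg1j : a * q2 = r3 * p1 - r1 * p3)
    (hg1k : a * q3 = r1 * p2 - r2 * p1)
    (h2 : p1 * q1 + p2 * q2 + p3 * q3 = 0) (h3 : r1 * q1 + r2 * q2 + r3 * q3 = 0)
    (h4 : a ^ 2 - (p1 * p1 + p2 * p2 + p3 * p3) + (q1 * q1 + q2 * q2 + q3 * q3)
      - (r1 * r1 + r2 * r2 + r3 * r3) = 1) :
    ((!![a + p1 + q2 + r3, q3 - r2, -p3 + r1, p2 - q1;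
        q3 - r2, a + p1 - q2 - r3, p2 + q1, p3 + r1;
        -p3 + r1, p2 + q1, a - p1 + q2 - r3, q3 + r2;
        p2 - q1, p3 + r1, q3 + r2, a - p1 - q2 + r3] : Matrix (Fin 4) (Fin 4) ℝ) + 1) * (!![a + p1 + q2 + r3, q3 - r2, -p3 + r1, p2 - q1;
        q3 - r2, a + p1 - q2 - r3, p2 + q1, p3 + r1;
        -p3 + r1, p2 + q1, a - p1 + q2 - r3, q3 + r2;
        p2 - q1, p3 + r1, q3 + r2, a - p1 - q2 + r3] + 1)
      = (!![a + p1 + q2 + r3, q3 - r2, -p3 + r1, p2 - q1;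
        q3 - r2, a + p1 - q2 - r3, p2 + q1, p3 + r1;
        -p3 + r1, p2 + q1, a - p1 + q2 - r3, q3 + r2;
        p2 - q1, p3 + r1, q3 + r2, a - p1 - q2 + r3] : Matrix (Fin 4) (Fin 4) ℝ) * !![2*a + 2*q2 + 2, 2*q3, (0:ℝ), -2*q1;
        2*q3, 2*a - 2*q2 + 2, 2*q1, (0:ℝ);
        (0:ℝ), 2*q1, 2*a + 2*q2 + 2, 2*q3;
        -2*q1, (0:ℝ), 2*q3, 2*a - 2*q2 + 2] := by
  ext i j
  fin_cases i <;> fin_cases j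
  · simp [Matrix.mul_apply, Fin.sum_univ_four, Matrix.one_apply] <;> linear_combination (-2 : ℝ) * hg1j + (-1 : ℝ) * h4
  · simp [Matrix.mul_apply, Fin.sum_univ_four, Matrix.one_apply] <;> linear_combination (-2 : ℝ) * hg1k + (-2 : ℝ) * h3
  · simp [Matrix.mul_apply, Fin.sum_univ_four, Matrix.one_apply] <;> ring
  · simp [Matrix.mul_apply, Fin.sum_univ_four, Matrix.one_apply] <;> linear_combination (2 : ℝ) * hg1i + (2 : ℝ) * h2
  · simp [Matrix.mul_apply, Fin.sum_univ_four, Matrix.one_apply] <;> linear_combination (-2 : ℝ) * hg1k + (2 : ℝ) * h3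
  · simp [Matrix.mul_apply, Fin.sum_univ_four, Matrix.one_apply] <;> linear_combination (2 : ℝ) * hg1j + (-1 : ℝ) * h4
  · simp [Matrix.mul_apply, Fin.sum_univ_four, Matrix.one_apply] <;> linear_combination (-2 : ℝ) * hg1i + (-2 : ℝ) * h2
  · simp [Matrix.mul_apply, Fin.sum_univ_four, Matrix.one_apply] <;> ring
  · simp [Matrix.mul_apply, Fin.sum_univ_four, Matrix.one_apply] <;> ring
  · simp [Matrix.mul_apply, Fin.sum_univ_four, Matrix.one_apply] <;> linear_combination (-2 : ℝ) * hg1i + (2 : ℝ) * h2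
  · simp [Matrix.mul_apply, Fin.sum_univ_four, Matrix.one_apply] <;> linear_combination (-2 : ℝ) * hg1j + (-1 : ℝ) * h4
  · simp [Matrix.mul_apply, Fin.sum_univ_four, Matrix.one_apply] <;> linear_combination (-2 : ℝ) * hg1k + (2 : ℝ) * h3
  · simp [Matrix.mul_apply, Fin.sum_univ_four, Matrix.one_apply] <;> linear_combination (2 : ℝ) * hg1i + (-2 : ℝ) * h2
  · simp [Matrix.mul_apply, Fin.sum_univ_four, Matrix.one_apply] <;> ring
  · simp [Matrix.mul_apply, Fin.sum_univ_four, Matrix.one_apply] <;> linear_combination (-2 : ℝ) * hg1k + (-2 : ℝ) * h3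
  · simp [Matrix.mul_apply, Fin.sum_univ_four, Matrix.one_apply] <;> linear_combination (2 : ℝ) * hg1j + (-1 : ℝ) * h4

lemma lem_com (a p1 p2 p3 q1 q2 q3 r1 r2 r3 : ℝ)
    (h2 : p1 * q1 + p2 * q2 + p3 * q3 = 0) (h3 : r1 * q1 + r2 * q2 + r3 * q3 = 0) :
    (!![a + p1 + q2 + r3, q3 - r2, -p3 + r1, p2 - q1;
        q3 - r2, a + p1 - q2 - r3, p2 + q1, p3 + r1;
        -p3 + r1, p2 + q1, a - p1 + q2 - r3, q3 + r2;
        p2 - q1, p3 + r1, q3 + r2, a - p1 - q2 + r3] : Matrix (Fin 4) (Fin 4) ℝ) * !![2*a - 2*q2 + 2, -2*q3, (0:ℝ), 2*q1;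
        -2*q3, 2*a + 2*q2 + 2, -2*q1, (0:ℝ);
        (0:ℝ), -2*q1, 2*a - 2*q2 + 2, -2*q3;
        2*q1, (0:ℝ), -2*q3, 2*a + 2*q2 + 2] = (!![2*a - 2*q2 + 2, -2*q3, (0:ℝ), 2*q1;
        -2*q3, 2*a + 2*q2 + 2, -2*q1, (0:ℝ);
        (0:ℝ), -2*q1, 2*a - 2*q2 + 2, -2*q3;
        2*q1, (0:ℝ), -2*q3, 2*a + 2*q2 + 2] : Matrix (Fin 4) (Fin 4) ℝ) * !![a + p1 + q2 + r3, q3 - r2, -p3 + r1, p2 - q1;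
        q3 - r2, a + p1 - q2 - r3, p2 + q1, p3 + r1;
        -p3 + r1, p2 + q1, a - p1 + q2 - r3, q3 + r2;
        p2 - q1, p3 + r1, q3 + r2, a - p1 - q2 + r3] := by
  ext i j
  fin_cases i <;> fin_cases j
  · simp [Matrix.mul_apply, Fin.sum_univ_four, Matrix.one_apply] <;> ring
  · simp [Matrix.mul_apply, Fin.sum_univ_four, Matrix.one_apply] <;> linear_combination (-4 : ℝ) * h3
  · simp [Matrix.mul_apply, Fin.sum_univ_four, Matrix.one_apply] <;> ring
  · simp [Matrix.mul_apply, Fin.sum_univ_four, Matrix.one_apply] <;> linear_combination (4 : ℝ) * h2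
  · simp [Matrix.mul_apply, Fin.sum_univ_four, Matrix.one_apply] <;> linear_combination (4 : ℝ) * h3
  · simp [Matrix.mul_apply, Fin.sum_univ_four, Matrix.one_apply] <;> ring
  · simp [Matrix.mul_apply, Fin.sum_univ_four, Matrix.one_apply] <;> linear_combination (-4 : ℝ) * h2
  · simp [Matrix.mul_apply, Fin.sum_univ_four, Matrix.one_apply] <;> ring
  · simp [Matrix.mul_apply, Fin.sum_univ_four, Matrix.one_apply] <;> ring
  · simp [Matrix.mul_apply, Fin.sum_univ_four, Matrix.one_apply] <;> linear_combination (4 : ℝ) * h2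
  · simp [Matrix.mul_apply, Fin.sum_univ_four, Matrix.one_apply] <;> ring
  · simp [Matrix.mul_apply, Fin.sum_univ_four, Matrix.one_apply] <;> linear_combination (4 : ℝ) * h3
  · simp [Matrix.mul_apply, Fin.sum_univ_four, Matrix.one_apply] <;> linear_combination (-4 : ℝ) * h2
  · simp [Matrix.mul_apply, Fin.sum_univ_four, Matrix.one_apply] <;> ring
  · simp [Matrix.mul_apply, Fin.sum_univ_four, Matrix.one_apply] <;> linear_combination (-4 : ℝ) * h3
  · simp [Matrix.mul_apply, Fin.sum_univ_four, Matrix.one_apply] <;> ring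

lemma lem_forward (a p1 p2 p3 q1 q2 q3 r1 r2 r3 : ℝ)
    (h4 : a ^ 2 - (p1 * p1 + p2 * p2 + p3 * p3) + (q1 * q1 + q2 * q2 + q3 * q3)
      - (r1 * r1 + r2 * r2 + r3 * r3) = 1)
    (hPD : (!![a + p1 + q2 + r3, q3 - r2, -p3 + r1, p2 - q1;
        q3 - r2, a + p1 - q2 - r3, p2 + q1, p3 + r1;
        -p3 + r1, p2 + q1, a - p1 + q2 - r3, q3 + r2;
        p2 - q1, p3 + r1, q3 + r2, a - p1 - q2 + r3] : Matrix (Fin 4) (Fin 4) ℝ).PosDef) :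
    0 < a ∧ 0 < 2 * a ^ 2 - 2 * (q1 * q1 + q2 * q2 + q3 * q3) + 1 := by
  rw [Matrix.posDef_iff_dotProduct_mulVec] at hPD
  have hd0 := hPD.2 (x := ![(1:ℝ),0,0,0]) (by
    intro hcon; have hcc := congrFun hcon 0; simp at hcc)
  have hd1 := hPD.2 (x := ![(0:ℝ),1,0,0]) (by
    intro hcon; have hcc := congrFun hcon 1; simp at hcc)
  have hd2 := hPD.2 (x := ![(0:ℝ),0,1,0]) (by
    intro hcon; have hcc := congrFun hcon 2; simp at hcc)
  have hd3 := hPD.2 (x := ![(0:ℝ),0,0,1]) (by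
    intro hcon; have hcc := congrFun hcon 3; simp at hcc)
  simp [dotProduct, Matrix.mulVec, Fin.sum_univ_four] at hd0 hd1 hd2 hd3
  have hm01 : 0 < (a + p1 + q2 + r3) * (a + p1 - q2 - r3) - (q3 - r2)^2 := by
    have h := hPD.2 (x := ![q3 - r2, -(a + p1 + q2 + r3), 0, 0]) (by
      intro hcon
      have hcc := congrFun hcon 1
      simp at hcc
      linarith)
    simp [dotProduct, Matrix.mulVec, Fin.sum_univ_four] at h
    nlinarith [h, hd0]
  have hm02 : 0 < (a + p1 + q2 + r3) * (a - p1 + q2 - r3) - (-p3 + r1)^2 := by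
    have h := hPD.2 (x := ![-p3 + r1, 0, -(a + p1 + q2 + r3), 0]) (by
      intro hcon
      have hcc := congrFun hcon 2
      simp at hcc
      linarith)
    simp [dotProduct, Matrix.mulVec, Fin.sum_univ_four] at h
    nlinarith [h, hd0]
  have hm03 : 0 < (a + p1 + q2 + r3) * (a - p1 - q2 + r3) - (p2 - q1)^2 := by
    have h := hPD.2 (x := ![p2 - q1, 0, 0, -(a + p1 + q2 + r3)]) (by
      intro hcon
      have hcc := congrFun hcon 3
      simp at hcc
      linarith)
    simp [dotProduct, Matrix.mulVec, Fin.sum_univ_four] at h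
    nlinarith [h, hd0]
  have hm12 : 0 < (a + p1 - q2 - r3) * (a - p1 + q2 - r3) - (p2 + q1)^2 := by
    have h := hPD.2 (x := ![0, p2 + q1, -(a + p1 - q2 - r3), 0]) (by
      intro hcon
      have hcc := congrFun hcon 2
      simp at hcc
      linarith)
    simp [dotProduct, Matrix.mulVec, Fin.sum_univ_four] at h
    nlinarith [h, hd1]
  have hm13 : 0 < (a + p1 - q2 - r3) * (a - p1 - q2 + r3) - (p3 + r1)^2 := by
    have h := hPD.2 (x := ![0, p3 + r1, 0, -(a + p1 - q2 - r3)]) (by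
      intro hcon
      have hcc := congrFun hcon 3
      simp at hcc
      linarith)
    simp [dotProduct, Matrix.mulVec, Fin.sum_univ_four] at h
    nlinarith [h, hd1]
  have hm23 : 0 < (a - p1 + q2 - r3) * (a - p1 - q2 + r3) - (q3 + r2)^2 := by
    have h := hPD.2 (x := ![0, 0, q3 + r2, -(a - p1 + q2 - r3)]) (by
      intro hcon
      have hcc := congrFun hcon 3
      simp at hcc
      linarith)
    simp [dotProduct, Matrix.mulVec, Fin.sum_univ_four] at h
    nlinarith [h, hd2]
  constructor
  · linarith [hd0, hd1, hd2, hd3]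
  · linarith [hm01, hm02, hm03, hm12, hm13, hm23, h4]

lemma lem_reverse (a p1 p2 p3 q1 q2 q3 r1 r2 r3 : ℝ)
    (hg1i : a * q1 = r2 * p3 - r3 * p2) (hg1j : a * q2 = r3 * p1 - r1 * p3)
    (hg1k : a * q3 = r1 * p2 - r2 * p1)
    (h2 : p1 * q1 + p2 * q2 + p3 * q3 = 0) (h3 : r1 * q1 + r2 * q2 + r3 * q3 = 0)
    (h4 : a ^ 2 - (p1 * p1 + p2 * p2 + p3 * p3) + (q1 * q1 + q2 * q2 + q3 * q3)
      - (r1 * r1 + r2 * r2 + r3 * r3) = 1)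
    (ha : 0 < a) (hc : 0 < 2 * a ^ 2 - 2 * (q1 * q1 + q2 * q2 + q3 * q3) + 1) :
    (!![a + p1 + q2 + r3, q3 - r2, -p3 + r1, p2 - q1;
        q3 - r2, a + p1 - q2 - r3, p2 + q1, p3 + r1;
        -p3 + r1, p2 + q1, a - p1 + q2 - r3, q3 + r2;
        p2 - q1, p3 + r1, q3 + r2, a - p1 - q2 + r3] : Matrix (Fin 4) (Fin 4) ℝ).PosDef := by
  set Xm : Matrix (Fin 4) (Fin 4) ℝ :=
      !![a + p1 + q2 + r3, q3 - r2, -p3 + r1, p2 - q1;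
        q3 - r2, a + p1 - q2 - r3, p2 + q1, p3 + r1;
        -p3 + r1, p2 + q1, a - p1 + q2 - r3, q3 + r2;
        p2 - q1, p3 + r1, q3 + r2, a - p1 - q2 + r3] with hXm
  set Ym : Matrix (Fin 4) (Fin 4) ℝ :=
      !![a - p1 + q2 - r3, q3 + r2, p3 - r1, -p2 - q1;
        q3 + r2, a - p1 - q2 + r3, -p2 + q1, -p3 - r1;
        p3 - r1, -p2 + q1, a + p1 + q2 + r3, q3 - r2;
        -p2 - q1, -p3 - r1, q3 - r2, a + p1 - q2 - r3] with hYm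
  set Mm : Matrix (Fin 4) (Fin 4) ℝ :=
      !![2*a + 2*q2 + 2, 2*q3, (0:ℝ), -2*q1;
        2*q3, 2*a - 2*q2 + 2, 2*q1, (0:ℝ);
        (0:ℝ), 2*q1, 2*a + 2*q2 + 2, 2*q3;
        -2*q1, (0:ℝ), 2*q3, 2*a - 2*q2 + 2] with hMm
  set Nm : Matrix (Fin 4) (Fin 4) ℝ :=
      !![2*a - 2*q2 + 2, -2*q3, (0:ℝ), 2*q1;
        -2*q3, 2*a + 2*q2 + 2, -2*q1, (0:ℝ);
        (0:ℝ), -2*q1, 2*a - 2*q2 + 2, -2*q3;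
        2*q1, (0:ℝ), -2*q3, 2*a + 2*q2 + 2] with hNm
  have hXX' : Xm * Ym = 1 := by
    rw [hXm, hYm]; exact lem_mul1 a p1 p2 p3 q1 q2 q3 r1 r2 r3 hg1i hg1j hg1k h2 h3 h4
  have hsq : (Xm + 1) * (Xm + 1) = Xm * Mm := by
    rw [hXm, hMm]; exact lem_sq a p1 p2 p3 q1 q2 q3 r1 r2 r3 hg1i hg1j hg1k h2 h3 h4
  have hcom : Xm * Nm = Nm * Xm := by
    rw [hXm, hNm]; exact lem_com a p1 p2 p3 q1 q2 q3 r1 r2 r3 h2 h3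
  have hMN : Mm * Nm = ((2*a+2)^2 - 4*(q1^2+q2^2+q3^2)) • (1 : Matrix (Fin 4) (Fin 4) ℝ) := by
    rw [hMm, hNm]; exact lem_MN a q1 q2 q3
  have hXt : Xmᵀ = Xm := by rw [hXm]; exact lem_tr a p1 p2 p3 q1 q2 q3 r1 r2 r3
  have hherm : Xm.IsHermitian := by
    show Xmᴴ = Xm
    rw [hXm]; exact lem_her a p1 p2 p3 q1 q2 q3 r1 r2 r3
  have hG : (Xm + 1) * Nm * (Xm + 1) = ((2*a+2)^2 - 4*(q1^2+q2^2+q3^2)) • Xm := by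
    have hc1 : Nm * (Xm + 1) = (Xm + 1) * Nm := by
      rw [mul_add, add_mul, mul_one, one_mul, hcom]
    calc (Xm + 1) * Nm * (Xm + 1) = (Xm + 1) * (Nm * (Xm + 1)) := by rw [mul_assoc]
      _ = (Xm + 1) * ((Xm + 1) * Nm) := by rw [hc1]
      _ = (Xm + 1) * (Xm + 1) * Nm := by rw [mul_assoc]
      _ = Xm * Mm * Nm := by rw [hsq]
      _ = Xm * (Mm * Nm) := by rw [mul_assoc]
      _ = Xm * (((2*a+2)^2 - 4*(q1^2+q2^2+q3^2)) • (1 : Matrix (Fin 4) (Fin 4) ℝ)) := by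
        rw [hMN]
      _ = ((2*a+2)^2 - 4*(q1^2+q2^2+q3^2)) • Xm := by rw [Matrix.mul_smul, mul_one]
  have hk : (0:ℝ) < (2*a+2)^2 - 4*(q1^2+q2^2+q3^2) := by nlinarith [ha, hc]
  have hN : Nm.PosDef := by
    have hinst := bigM_posdef (2*a+2) (-q1) (-q2) (-q3) (by linarith) (by nlinarith [hk])
    have hNN : Nm = !![(2*a+2)+2*(-q2), 2*(-q3), 0, -2*(-q1);
        2*(-q3), (2*a+2)-2*(-q2), 2*(-q1), 0;
        0, 2*(-q1), (2*a+2)+2*(-q2), 2*(-q3);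
        -2*(-q1), 0, 2*(-q3), (2*a+2)-2*(-q2)] := by
      rw [hNm]
      ext i j
      fin_cases i <;> fin_cases j <;> simp <;> ring
    rw [hNN]
    exact hinst
  refine Matrix.PosDef.of_dotProduct_mulVec_pos hherm (fun x hx => ?_)
  have hst : star x = x := by ext i; simp
  rw [hst]
  have hy_ne : (Xm + 1) *ᵥ x ≠ 0 := by
    intro h0
    have h5 : ((2*a+2)^2 - 4*(q1^2+q2^2+q3^2)) • (Xm *ᵥ x) = 0 := by
      calc ((2*a+2)^2 - 4*(q1^2+q2^2+q3^2)) • (Xm *ᵥ x)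
          = (((2*a+2)^2 - 4*(q1^2+q2^2+q3^2)) • Xm) *ᵥ x := by
            rw [Matrix.smul_mulVec]
        _ = ((Xm + 1) * Nm * (Xm + 1)) *ᵥ x := by rw [hG]
        _ = (Xm + 1) *ᵥ (Nm *ᵥ ((Xm + 1) *ᵥ x)) := by
            rw [← Matrix.mulVec_mulVec, ← Matrix.mulVec_mulVec]
        _ = 0 := by rw [h0, Matrix.mulVec_zero, Matrix.mulVec_zero]
    have hXx : Xm *ᵥ x = 0 := (smul_eq_zero.mp h5).resolve_left (ne_of_gt hk)
    apply hx
    have hsplit : (Xm + 1) *ᵥ x = Xm *ᵥ x + x := by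
      rw [Matrix.add_mulVec, Matrix.one_mulVec]
    rw [hsplit, hXx, zero_add] at h0
    exact h0
  have hvpos := hN.dotProduct_mulVec_pos hy_ne
  rw [show star ((Xm + 1) *ᵥ x) = (Xm + 1) *ᵥ x from by ext i; simp] at hvpos
  have htr : (Xm + 1)ᵀ = Xm + 1 := by rw [Matrix.transpose_add, hXt, Matrix.transpose_one]
  have hval : ((2*a+2)^2 - 4*(q1^2+q2^2+q3^2)) * (x ⬝ᵥ (Xm *ᵥ x))
      = ((Xm + 1) *ᵥ x) ⬝ᵥ (Nm *ᵥ ((Xm + 1) *ᵥ x)) := by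
    calc ((2*a+2)^2 - 4*(q1^2+q2^2+q3^2)) * (x ⬝ᵥ (Xm *ᵥ x))
        = x ⬝ᵥ ((((2*a+2)^2 - 4*(q1^2+q2^2+q3^2)) • Xm) *ᵥ x) := by
          rw [Matrix.smul_mulVec, dotProduct_smul, smul_eq_mul]
      _ = x ⬝ᵥ ((Xm + 1) *ᵥ (Nm *ᵥ ((Xm + 1) *ᵥ x))) := by
          rw [← hG, ← Matrix.mulVec_mulVec, ← Matrix.mulVec_mulVec]
      _ = ((Xm + 1)ᵀ *ᵥ x) ⬝ᵥ (Nm *ᵥ ((Xm + 1) *ᵥ x)) := by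
          rw [Matrix.dotProduct_mulVec, ← Matrix.mulVec_transpose]
      _ = ((Xm + 1) *ᵥ x) ⬝ᵥ (Nm *ᵥ ((Xm + 1) *ᵥ x)) := by rw [htr]
  nlinarith [hvpos, hval, hk]

theorem stmt_16 (a : ℝ) (p q r : Quaternion ℝ)
    (hp : p.re = 0) (hq : q.re = 0) (hr : r.re = 0)
    (h1 : a • q = qcross r p) (h2 : qdot p q = 0) (h3 : qdot r q = 0)
    (h4 : a ^ 2 - qdot p p + qdot q q - qdot r r = 1)
    (X : Matrix (Fin 4) (Fin 4) ℝ)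
    (hXdef : X = a • quatM 1 1 + quatM p qi + quatM q qj + quatM r qk) :
    (X.PosDef ↔ 0 < a ∧ 0 < 2 * a ^ 2 - 2 * qdot q q + 1) ∧
    (0 < a → q = 0 → X.PosDef) := by
  obtain ⟨p0, p1, p2, p3⟩ := p
  obtain ⟨q0, q1, q2, q3⟩ := q
  obtain ⟨r0, r1, r2, r3⟩ := r
  replace hp : p0 = 0 := hp
  replace hq : q0 = 0 := hq
  replace hr : r0 = 0 := hr
  subst hp hq hr
  rw [Quaternion.ext_iff] at h1
  obtain ⟨h1r, hg1i, hg1j, hg1k⟩ := h1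
  simp [qcross] at hg1i hg1j hg1k
  simp only [qdot] at h2 h3 h4 ⊢
  subst hXdef
  rw [lem_X a p1 p2 p3 q1 q2 q3 r1 r2 r3]
  have main : (!![a + p1 + q2 + r3, q3 - r2, -p3 + r1, p2 - q1;
        q3 - r2, a + p1 - q2 - r3, p2 + q1, p3 + r1;
        -p3 + r1, p2 + q1, a - p1 + q2 - r3, q3 + r2;
        p2 - q1, p3 + r1, q3 + r2, a - p1 - q2 + r3] : Matrix (Fin 4) (Fin 4) ℝ).PosDef
      ↔ 0 < a ∧ 0 < 2 * a ^ 2 - 2 * (q1 * q1 + q2 * q2 + q3 * q3) + 1 :=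
    ⟨fun hPD => lem_forward a p1 p2 p3 q1 q2 q3 r1 r2 r3 h4 hPD,
     fun hcond => lem_reverse a p1 p2 p3 q1 q2 q3 r1 r2 r3 hg1i hg1j hg1k h2 h3 h4
       hcond.1 hcond.2⟩
  refine ⟨main, fun ha h0 => main.mpr ⟨ha, ?_⟩⟩
  replace h0 := Quaternion.ext_iff.mp h0
  change _ ∧ q1 = 0 ∧ q2 = 0 ∧ q3 = 0 at h0
  obtain ⟨-, e1, e2, e3⟩ := h0
  subst e1
  subst e2
  subst e3
  nlinarith [sq_nonneg a, ha]
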